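/- If p is a prime that does not divide any term of the sequence m, then coordinatewise p-th power map on the solenoid Σ_m, (z_n) ↦ (z_nᵖ), is a surjection of Σ_m onto itself whose fibers each have exactly p elements. -/

import Mathlib

open Polynomial in
/-- The number of `p`-th roots of unity in the circle group is `p`. -/
lemma circle_card_pow_eq_one (p : ℕ) (hp : 0 < p) :
    Nat.card {ζ : Circle // ζ ^ p = 1} = p := by
  have hprim := Complex.isPrimitiveRoot_exp p hp.ne'
  have e : {ζ : Circle // ζ ^ p = 1} ≃ (nthRootsFinset p (1 : ℂ) : Finset ℂ) :=
    { toFun := fun ζ => ⟨(ζ.1 : ℂ), (mem_nthRootsFinset hp 1).2 (by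
        rw [← Circle.coe_pow, ζ.2, Circle.coe_one])⟩
      invFun := fun z => by
        have hz : (z.1 : ℂ) ^ p = 1 := (mem_nthRootsFinset hp 1).1 z.2
        have habs : ‖z.1‖ = 1 := by
          have h1 : ‖z.1‖ ^ p = 1 := by
            rw [← norm_pow, hz, norm_one]
          rcases lt_trichotomy ‖z.1‖ 1 with h | h | h
          · exact absurd h1 (by
              have := pow_lt_one₀ (norm_nonneg _) h hp.ne'
              exact ne_of_lt this)
          · exact h
          · exact absurd h1 (by
              have := one_lt_pow₀ h hp.ne'
              exact (ne_of_gt this))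
        refine ⟨⟨z.1, mem_sphere_zero_iff_norm.2 (by exact habs)⟩, ?_⟩
        apply Circle.ext
        show (z.1 : ℂ) ^ p = 1
        exact hz
      left_inv := fun ζ => by ext; rfl
      right_inv := fun z => by ext; rfl }
  rw [Nat.card_congr e, Nat.card_eq_finsetCard, hprim.card_nthRootsFinset]

lemma circle_bezout_step (x y : Circle) (P M a b : ℤ) (hab : a * P + b * M = 1)
    (h : x ^ P = y ^ M) :
    (y ^ a * x ^ b) ^ M = x ∧ (y ^ a * x ^ b) ^ P = y := by
  constructor
  · calc (y ^ a * x ^ b) ^ M = (y ^ M) ^ a * x ^ (b * M) := by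
          rw [mul_zpow, ← zpow_mul, ← zpow_mul, mul_comm a M, zpow_mul y M a]
    _ = x ^ (P * a) * x ^ (b * M) := by rw [← h, ← zpow_mul]
    _ = x ^ (a * P + b * M) := by rw [← zpow_add, mul_comm P a]
    _ = x := by rw [hab, zpow_one]
  · calc (y ^ a * x ^ b) ^ P = y ^ (a * P) * (x ^ P) ^ b := by
          rw [mul_zpow, ← zpow_mul, ← zpow_mul, mul_comm b P, zpow_mul x P b]
    _ = y ^ (a * P) * y ^ (b * M) := by rw [h, ← zpow_mul, mul_comm M b]
    _ = y := by rw [← zpow_add, hab, zpow_one]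

/-- Cancellation: if `x` and `y` agree on coprime powers, they are equal. -/
lemma circle_pow_cancel (x y : Circle) (P M a b : ℤ) (hab : a * P + b * M = 1)
    (hP : x ^ P = y ^ P) (hM : x ^ M = y ^ M) : x = y := by
  calc x = x ^ (a * P + b * M) := by rw [hab, zpow_one]
  _ = (x ^ P) ^ a * (x ^ M) ^ b := by
        rw [zpow_add, mul_comm a P, mul_comm b M, zpow_mul, zpow_mul]
  _ = (y ^ P) ^ a * (y ^ M) ^ b := by rw [hP, hM]
  _ = y := by
        rw [← zpow_mul, ← zpow_mul, ← zpow_add, mul_comm P a, mul_comm M b, hab, zpow_one]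

lemma circle_exp_pow (r : ℝ) (n : ℕ) : Circle.exp r ^ n = Circle.exp (n * r) := by
  induction n with
  | zero => simp
  | succ k ih =>
    rw [pow_succ, ih, ← Circle.exp_add]
    push_cast
    ring_nf

/-- Given a compatible sequence `w` and a `p`-th root of `w 0`,
extend it to a full compatible thread of `p`-th roots. -/
lemma circle_exists_thread (m : ℕ → ℕ) (p : ℕ)
    (a b : ℕ → ℤ) (hab : ∀ n, a n * p + b n * m n = 1)
    (w : ℕ → Circle) (hw : ∀ n, w n = w (n + 1) ^ m n)
    (z0 : Circle) (h0 : z0 ^ p = w 0) :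
    ∃ z : ℕ → Circle, z 0 = z0 ∧ (∀ n, z n = z (n + 1) ^ m n) ∧ ∀ n, z n ^ p = w n := by
  set z : ℕ → Circle := fun n =>
    Nat.rec z0 (fun k zk => w (k + 1) ^ a k * zk ^ b k) n with hz
  have hstep : ∀ n, z n ^ p = w n → (z (n + 1) ^ (m n : ℤ) = z n ∧ z (n + 1) ^ p = w (n + 1)) := by
    intro n hn
    have h : z n ^ (p : ℤ) = w (n + 1) ^ (m n : ℤ) := by
      rw [zpow_natCast, zpow_natCast, hn, hw n]
    have := circle_bezout_step (z n) (w (n + 1)) p (m n) (a n) (b n) (hab n) h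
    refine ⟨this.1, ?_⟩
    have h2 := this.2
    rw [zpow_natCast] at h2
    exact h2
  have hp' : ∀ n, z n ^ p = w n := by
    intro n
    induction n with
    | zero => exact h0
    | succ k ih => exact (hstep k ih).2
  refine ⟨z, rfl, fun n => ?_, hp'⟩
  have := (hstep n (hp' n)).1
  rw [zpow_natCast] at this
  exact this.symm

/-- If `p` is a prime dividing no term of the sequence `m` of positive integers, then
the coordinatewise `p`-th power map on the solenoid `Σ_m` maps `Σ_m` onto itself and
each of its fibers has exactly `p` elements. -/
theorem solenoid_pth_power_surjective_fibers (m : ℕ → ℕ) (hm : ∀ n, 0 < m n)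
    (p : ℕ) (hp : p.Prime) (hpm : ∀ n, ¬ p ∣ m n) :
    let S : Set (ℕ → Circle) := {z | ∀ n : ℕ, z n = z (n + 1) ^ m n}
    let F : (ℕ → Circle) → (ℕ → Circle) := fun z n => z n ^ p
    Set.MapsTo F S S ∧ Set.SurjOn F S S ∧
      ∀ w ∈ S, Nat.card ({z : ℕ → Circle | z ∈ S ∧ F z = w}) = p := by
  intro S F
  -- Bezout coefficients
  have hcop : ∀ n, IsCoprime (p : ℤ) (m n : ℤ) := fun n =>
    Nat.isCoprime_iff_coprime.mpr ((Nat.Prime.coprime_iff_not_dvd hp).2 (hpm n))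
  choose a b hab using fun n => hcop n
  -- MapsTo
  have hmaps : Set.MapsTo F S S := by
    intro z hz n
    show z n ^ p = (z (n + 1) ^ p) ^ m n
    rw [hz n, ← pow_mul, ← pow_mul, mul_comm]
  -- For every w ∈ S and every p-th root u of w 0, there is a thread
  have hthread : ∀ w ∈ S, ∀ u : Circle, u ^ p = w 0 →
      ∃ z : ℕ → Circle, z 0 = u ∧ z ∈ S ∧ F z = w := by
    intro w hw u hu
    obtain ⟨z, hz0, hzS, hzp⟩ := circle_exists_thread m p a b hab w hw u hu
    exact ⟨z, hz0, hzS, funext hzp⟩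
  -- Surjectivity
  have hsurj : Set.SurjOn F S S := by
    intro w hw
    have hu : Circle.exp (Complex.arg (w 0) / p) ^ p = w 0 := by
      rw [circle_exp_pow, mul_div_cancel₀ _ (by exact_mod_cast hp.pos.ne'), Circle.exp_arg]
    obtain ⟨z, _, hzS, hzF⟩ := hthread w hw _ hu
    exact ⟨z, hzS, hzF⟩
  refine ⟨hmaps, hsurj, ?_⟩
  -- Fiber count
  intro w hw
  -- uniqueness: a fiber element is determined by its 0th coordinate
  have huniq : ∀ z z' : ℕ → Circle, z ∈ S → z' ∈ S → F z = w → F z' = w →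
      z 0 = z' 0 → z = z' := by
    intro z z' hzS hz'S hzF hz'F h0
    funext n
    induction n with
    | zero => exact h0
    | succ k ih =>
      refine circle_pow_cancel _ _ p (m k) (a k) (b k) (hab k) ?_ ?_
      · rw [zpow_natCast, zpow_natCast]
        have h1 : z (k + 1) ^ p = w (k + 1) := congrFun hzF (k + 1)
        have h2 : z' (k + 1) ^ p = w (k + 1) := congrFun hz'F (k + 1)
        rw [h1, h2]
      · rw [zpow_natCast, zpow_natCast, ← hzS k, ← hz'S k, ih]
  -- pick a base point of the fiber
  obtain ⟨z₀, hz₀S, hz₀F⟩ := hsurj hw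
  have hw0 : z₀ 0 ^ p = w 0 := congrFun hz₀F 0
  have hfib : ∀ ζ : {ζ : Circle // ζ ^ p = 1}, (z₀ 0 * ζ.1) ^ p = w 0 := by
    intro ζ
    rw [mul_pow, hw0, ζ.2, mul_one]
  choose g hg1 hg2 hg3 using fun ζ : {ζ : Circle // ζ ^ p = 1} =>
    hthread w hw (z₀ 0 * ζ.1) (hfib ζ)
  -- the fiber is in bijection with the p-th roots of unity
  have e : {z : ℕ → Circle | z ∈ S ∧ F z = w} ≃ {ζ : Circle // ζ ^ p = 1} :=
    { toFun := fun z => ⟨z.1 0 / z₀ 0, by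
        have h1 : z.1 0 ^ p = w 0 := congrFun z.2.2 0
        rw [div_pow, h1, hw0, div_self']⟩
      invFun := fun ζ => ⟨g ζ, hg2 ζ, hg3 ζ⟩
      left_inv := fun z => by
        apply Subtype.ext
        apply huniq _ _ (hg2 _) z.2.1 (hg3 _) z.2.2
        simp only [hg1]
        exact mul_div_cancel _ _
      right_inv := fun ζ => by
        apply Subtype.ext
        simp only [hg1]
        exact mul_div_cancel_left _ _ }
  rw [Nat.card_congr e]
  exact circle_card_pow_eq_one p hp.pos
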